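/- Let E and X be topological spaces with X path-connected and locally path-connected, and let p : E → X be a covering map (IsCoveringMap p). Let U ⊆ X be an open path-connected subset, x₀ ∈ U, and suppose every loop in X based at x₀ is path-homotopic to a loop whose range is contained in U (equivalently, the homomorphism π₁(U, x₀) → π₁(X, x₀) induced by inclusion is surjective). If s : U → E is a continuous map with p (s u) = u for every u ∈ U (a continuous section of p over U), then there exists a continuous map S : X → E with p (S x) = x for every x ∈ X and S u = s u for every u ∈ U; that is, the section s extends to a global continuous section of p. -/

import Mathlib

open unitInterval Set Topology Metric

namespace MonodromyAux

variable {E X : Type*} [TopologicalSpace E] [TopologicalSpace X] {p : E → X}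

variable [hne : ∀ x : X, Nonempty (p ⁻¹' {x})]

/-- chosen trivialization at `x` -/
noncomputable def triv (hp : IsCoveringMap p) (x : X) : Bundle.Trivialization (p ⁻¹' {x}) p :=
  (hp x).toTrivialization

lemma mem_triv_baseSet (hp : IsCoveringMap p) (x : X) : x ∈ (triv hp x).baseSet :=
  (hp x).mem_toTrivialization_baseSet

lemma discrete_fiber (hp : IsCoveringMap p) (x : X) : DiscreteTopology (p ⁻¹' {x}) :=
  (hp x).1

lemma isPreconnected_Icc_I (a b : I) : IsPreconnected (Icc a b) := by
  have h : (Subtype.val '' Icc a b : Set ℝ) = Icc (a : ℝ) (b : ℝ) := by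
    ext x
    constructor
    · rintro ⟨y, hy, rfl⟩
      exact ⟨hy.1, hy.2⟩
    · rintro ⟨h1, h2⟩
      exact ⟨⟨x, le_trans a.2.1 h1, le_trans h2 b.2.2⟩, ⟨h1, h2⟩, rfl⟩
  rw [← IsInducing.subtypeVal.isPreconnected_image, h]
  exact isPreconnected_Icc

lemma lift_unique (hp : IsCoveringMap p) {Γ₁ Γ₂ : I → E}
    (h₁ : Continuous Γ₁) (h₂ : Continuous Γ₂) (h : p ∘ Γ₁ = p ∘ Γ₂) (h0 : Γ₁ 0 = Γ₂ 0) :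
    Γ₁ = Γ₂ :=
  hp.eq_of_comp_eq h₁ h₂ h 0 h0

/-- `k/n` clamped to `[0,1]`. -/
noncomputable def itv (n k : ℕ) : I :=
  ⟨min ((k : ℝ) / n) 1, le_min (by positivity) zero_le_one, min_le_right _ _⟩

lemma itv_zero (n : ℕ) : itv n 0 = 0 := by
  apply Subtype.ext
  simp [itv]

lemma itv_last {n : ℕ} (hn : 0 < n) : itv n n = 1 := by
  apply Subtype.ext
  simp [itv, div_self (by positivity : (n : ℝ) ≠ 0)]

lemma itv_mono (n k : ℕ) : itv n k ≤ itv n (k + 1) := by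
  apply Subtype.coe_le_coe.1
  apply min_le_min _ le_rfl
  gcongr
  exact_mod_cast Nat.le_succ k

lemma itv_sub {n : ℕ} (hn : 0 < n) (k : ℕ) : (itv n (k + 1) : ℝ) - itv n k ≤ 1 / n := by
  have hn' : (0 : ℝ) < n := by positivity
  show min ((k + 1 : ℕ) / n : ℝ) 1 - min ((k : ℝ) / n) 1 ≤ 1 / n
  push_cast
  rcases le_or_gt 1 ((k : ℝ) / n) with h | h
  · have h' : (1 : ℝ) ≤ (k + 1) / n := le_trans h (by gcongr; linarith)
    rw [min_eq_right h, min_eq_right h']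
    simp [le_of_lt (by positivity : (0:ℝ) < 1 / n)]
  · rw [min_eq_left h.le]
    have : min ((k + 1 : ℝ) / n) 1 ≤ (k + 1) / n := min_le_left _ _
    have hdiv : ((k : ℝ) + 1) / n - k / n = 1 / n := by field_simp; ring
    linarith

lemma exists_partition {ι : Sort*} [Nonempty ι] (c : ι → Set I) (hc : ∀ i, IsOpen (c i))
    (hcov : (univ : Set I) ⊆ ⋃ i, c i) :
    ∃ n : ℕ, 0 < n ∧ ∀ k : ℕ, ∃ i, Icc (itv n k) (itv n (k + 1)) ⊆ c i := by
  obtain ⟨δ, hδ, hball⟩ := lebesgue_number_lemma_of_metric isCompact_univ hc hcov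
  obtain ⟨n, hn⟩ := exists_nat_one_div_lt hδ
  refine ⟨n + 1, Nat.succ_pos n, fun k => ?_⟩
  obtain ⟨i, hi⟩ := hball (itv (n + 1) k) (mem_univ _)
  refine ⟨i, fun u hu => hi ?_⟩
  have h1 : (itv (n + 1) k : ℝ) ≤ u := hu.1
  have h2 : (u : ℝ) ≤ itv (n + 1) (k + 1) := hu.2
  have h3 : (itv (n + 1) (k + 1) : ℝ) - itv (n + 1) k ≤ 1 / ((n : ℝ) + 1) := by
    have := itv_sub (n := n + 1) (Nat.succ_pos n) k
    push_cast at this ⊢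
    linarith
  rw [Metric.mem_ball, Subtype.dist_eq, Real.dist_eq, abs_of_nonneg (by linarith)]
  have : (1 : ℝ) / (n + 1) < δ := by exact_mod_cast hn
  linarith

lemma exists_lift (hp : IsCoveringMap p) (γ : C(I, X)) (e : E) (he : p e = γ 0) :
    ∃ Γ : C(I, E), (∀ t, p (Γ t) = γ t) ∧ Γ 0 = e := by
  classical
  set c : X → Set I := fun x => γ ⁻¹' (triv hp x).baseSet with hc_def
  have hc : ∀ x, IsOpen (c x) := fun x => (triv hp x).open_baseSet.preimage γ.continuous
  have hcov : (univ : Set I) ⊆ ⋃ x, c x := fun t _ =>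
    mem_iUnion.2 ⟨γ t, mem_triv_baseSet hp (γ t)⟩
  have : Nonempty X := ⟨γ 0⟩
  obtain ⟨n, hn, hseg⟩ := exists_partition c hc hcov
  suffices h : ∀ k : ℕ, ∃ Γ : C(I, E), Γ 0 = e ∧ ∀ t, t ≤ itv n k → p (Γ t) = γ t by
    obtain ⟨Γ, h0, hl⟩ := h n
    exact ⟨Γ, fun t => hl t (by rw [itv_last hn]; exact le_one t), h0⟩
  intro k
  induction k with
  | zero =>
    refine ⟨ContinuousMap.const I e, rfl, fun t ht => ?_⟩
    rw [itv_zero] at ht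
    have : t = 0 := le_antisymm ht (nonneg t)
    rw [this]
    exact he
  | succ k ih =>
    obtain ⟨Γ, h0, hl⟩ := ih
    obtain ⟨x, hx⟩ := hseg k
    have hab : itv n k ≤ itv n (k + 1) := itv_mono n k
    set T := triv hp x with hT
    set a := itv n k
    set b := itv n (k + 1)
    have hpa : p (Γ a) = γ a := hl a le_rfl
    have hsrc : Γ a ∈ T.source := T.mem_source.2 (by rw [hpa]; exact hx ⟨le_rfl, hab⟩)
    have hclamp_cont : Continuous (fun t : I => max a (min t b)) :=
      continuous_const.max (continuous_id.min continuous_const)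
    have hclamp_mem : ∀ t : I, max a (min t b) ∈ Icc a b := fun t =>
      ⟨le_max_left _ _, max_le hab (min_le_right _ _)⟩
    set g : I → E := fun t => T.toOpenPartialHomeomorph.symm (γ (max a (min t b)), (T (Γ a)).2)
      with hg
    have hg_cont : Continuous g := by
      apply T.toOpenPartialHomeomorph.continuousOn_symm.comp_continuous
      · exact (γ.continuous.comp hclamp_cont).prodMk continuous_const
      · intro t
        exact T.mem_target.2 (hx (hclamp_mem t))
    have hbd : Γ a = g a := by
      have h1 : max a (min a b) = a := by simp [min_eq_left hab]
      rw [hg]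
      simp only [h1]
      have h2 : (γ a, (T (Γ a)).2) = T (Γ a) := by
        refine Prod.ext ?_ rfl
        show γ a = (T (Γ a)).1
        rw [T.coe_fst hsrc, hpa]
      rw [h2]
      exact (T.toOpenPartialHomeomorph.left_inv hsrc).symm
    have hΓ'_cont : Continuous (fun t : I => if t ≤ a then Γ t else g t) :=
      Continuous.if_le Γ.continuous hg_cont continuous_id continuous_const
        (fun t ht => by rw [show t = a from ht]; exact hbd)
    refine ⟨⟨fun t => if t ≤ a then Γ t else g t, hΓ'_cont⟩, ?_, fun t ht => ?_⟩
    · show (if (0 : I) ≤ a then Γ 0 else g 0) = e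
      rw [if_pos (nonneg' : (0:I) ≤ a)]
      exact h0
    · show p (if t ≤ a then Γ t else g t) = γ t
      by_cases hta : t ≤ a
      · rw [if_pos hta]; exact hl t hta
      · rw [if_neg hta]
        have h1 : max a (min t b) = t := by
          rw [min_eq_left ht, max_eq_right (le_of_not_ge hta)]
        rw [hg]
        simp only [h1]
        exact T.proj_symm_apply (T.mem_target.2 (hx ⟨le_of_not_ge hta, ht⟩))

variable (hp : IsCoveringMap p)

/-- The chosen lift of a continuous map `I → X`. -/
noncomputable def liftCM (γ : C(I, X)) (e : E) (he : p e = γ 0) : C(I, E) :=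
  (exists_lift hp γ e he).choose

lemma liftCM_proj (γ : C(I, X)) (e : E) (he : p e = γ 0) (t : I) :
    p (liftCM hp γ e he t) = γ t :=
  (exists_lift hp γ e he).choose_spec.1 t

lemma liftCM_zero (γ : C(I, X)) (e : E) (he : p e = γ 0) :
    liftCM hp γ e he 0 = e :=
  (exists_lift hp γ e he).choose_spec.2

lemma liftCM_eq {γ : C(I, X)} {e : E} {he : p e = γ 0} {Γ : I → E}
    (hc : Continuous Γ) (hproj : ∀ t, p (Γ t) = γ t) (h0 : Γ 0 = e) (t : I) :
    Γ t = liftCM hp γ e he t :=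
  congrFun (lift_unique hp hc (liftCM hp γ e he).continuous
    (funext fun u => (hproj u).trans (liftCM_proj hp γ e he u).symm)
    (h0.trans (liftCM_zero hp γ e he).symm)) t

/-- Endpoint of the chosen lift of a path. -/
noncomputable def liftEnd {a b : X} (γ : Path a b) (e : E) (he : p e = a) : E :=
  liftCM hp γ.toContinuousMap e (by rw [he]; exact γ.source.symm) 1

lemma liftEnd_proj {a b : X} (γ : Path a b) (e : E) (he : p e = a) :
    p (liftEnd hp γ e he) = b := by
  exact (liftCM_proj hp γ.toContinuousMap e _ 1).trans γ.target

lemma liftEnd_eq {a b : X} (γ : Path a b) (e : E) (he : p e = a) {Γ : I → E}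
    (hc : Continuous Γ) (hproj : ∀ t, p (Γ t) = γ t) (h0 : Γ 0 = e) :
    Γ 1 = liftEnd hp γ e he :=
  liftCM_eq hp hc hproj h0 1

/-- Lifting a path whose range lies in the domain of a continuous section. -/
lemma liftEnd_of_section {U : Set X} (s : U → E) (hs : Continuous s)
    (hsect : ∀ u : U, p (s u) = u) {a b : X} (γ : Path a b) (hγ : ∀ t, γ t ∈ U)
    (ha : a ∈ U) (hb : b ∈ U) (he : p (s ⟨a, ha⟩) = a) :
    liftEnd hp γ (s ⟨a, ha⟩) he = s ⟨b, hb⟩ := by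
  have h := liftEnd_eq hp (Γ := fun t => s ⟨γ t, hγ t⟩) γ (s ⟨a, ha⟩) he
    (hs.comp (Continuous.subtype_mk γ.continuous _))
    (fun t => hsect _) (congrArg s (Subtype.ext γ.source))
  rw [← h]
  exact congrArg s (Subtype.ext γ.target)

/-- Lift of a concatenation: endpoint is obtained by lifting the second path from the
endpoint of the lift of the first. -/
lemma liftEnd_trans {a b c : X} (γ : Path a b) (γ' : Path b c) (e : E) (he : p e = a) :
    liftEnd hp (γ.trans γ') e he =
      liftEnd hp γ' (liftEnd hp γ e he) (liftEnd_proj hp γ e he) := by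
  set he1 : p e = γ.toContinuousMap 0 := by rw [he]; exact γ.source.symm
  set Γ₁ : Path e (liftEnd hp γ e he) :=
    ⟨liftCM hp γ.toContinuousMap e he1, liftCM_zero hp _ _ _, rfl⟩ with hΓ₁
  set he2 : p (liftEnd hp γ e he) = γ'.toContinuousMap 0 := by
    rw [liftEnd_proj hp γ e he]; exact γ'.source.symm
  set Γ₂ : Path (liftEnd hp γ e he) (liftEnd hp γ' (liftEnd hp γ e he) (liftEnd_proj hp γ e he)) :=
    ⟨liftCM hp γ'.toContinuousMap (liftEnd hp γ e he) he2, liftCM_zero hp _ _ _, rfl⟩ with hΓ₂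
  have key := liftEnd_eq hp (Γ := (Γ₁.trans Γ₂ : I → E)) (γ.trans γ') e he
    (Γ₁.trans Γ₂).continuous ?_ (Path.source _)
  · rw [← key]
    exact Path.target _
  · intro t
    rw [Path.trans_apply, Path.trans_apply]
    split
    · exact liftCM_proj hp γ.toContinuousMap e he1 _
    · exact liftCM_proj hp γ'.toContinuousMap (liftEnd hp γ e he) he2 _

/-- Lift of the reverse path. -/
lemma liftEnd_symm {a b : X} (γ : Path a b) (e : E) (he : p e = a) :
    liftEnd hp γ.symm (liftEnd hp γ e he) (liftEnd_proj hp γ e he) = e := by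
  set he1 : p e = γ.toContinuousMap 0 := by rw [he]; exact γ.source.symm
  have key := liftEnd_eq hp
    (Γ := fun t => liftCM hp γ.toContinuousMap e he1 (unitInterval.symm t))
    γ.symm (liftEnd hp γ e he) (liftEnd_proj hp γ e he)
    ((liftCM hp γ.toContinuousMap e he1).continuous.comp unitInterval.continuous_symm)
    (fun t => liftCM_proj hp _ _ _ _)
    (by show liftCM hp γ.toContinuousMap e he1 (unitInterval.symm 0) = liftEnd hp γ e he
        rw [unitInterval.symm_zero]
        rfl)
  rw [← key]
  show liftCM hp γ.toContinuousMap e he1 (unitInterval.symm 1) = e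
  rw [unitInterval.symm_one]
  exact liftCM_zero hp _ _ _

/-- Monodromy: homotopic paths have lifts with the same endpoint. -/
lemma liftEnd_congr {a b : X} (γ γ' : Path a b) (h : γ.Homotopic γ') (e : E) (he : p e = a) :
    liftEnd hp γ e he = liftEnd hp γ' e he := by
  classical
  obtain ⟨H⟩ := h
  set row : I → C(I, X) := fun τ => H.toContinuousMap.curry τ with hrow
  have hrowapp : ∀ τ v, row τ v = H (τ, v) := fun _ _ => rfl
  have hrow0 : ∀ τ, row τ 0 = a := fun τ => H.source τ
  have hrow1 : ∀ τ, row τ 1 = b := fun τ => H.target τ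
  have heτ : ∀ τ, p e = row τ 0 := fun τ => he.trans (hrow0 τ).symm
  set F : I → E := fun τ => liftCM hp (row τ) e (heτ τ) 1 with hF
  have hF0 : F 0 = liftEnd hp γ e he := by
    refine liftCM_eq hp (liftCM hp (row 0) e (heτ 0)).continuous (fun v => ?_)
      (liftCM_zero hp _ _ _) 1
    exact (liftCM_proj hp (row 0) e (heτ 0) v).trans (H.apply_zero v)
  have hF1 : F 1 = liftEnd hp γ' e he := by
    refine liftCM_eq hp (liftCM hp (row 1) e (heτ 1)).continuous (fun v => ?_)
      (liftCM_zero hp _ _ _) 1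
    exact (liftCM_proj hp (row 1) e (heτ 1) v).trans (H.apply_one v)
  have hfib : ∀ τ, p (F τ) = b := fun τ =>
    (liftCM_proj hp (row τ) e (heτ τ) 1).trans (hrow1 τ)
  have key : ∀ t0 : I, ∀ᶠ τ in 𝓝 t0, F τ = F t0 := by
    intro t0
    have choice : ∀ u : I, ∃ (A B : Set I), IsOpen A ∧ IsOpen B ∧ t0 ∈ A ∧ u ∈ B ∧
        ∀ τ ∈ A, ∀ v ∈ B, H (τ, v) ∈ (triv hp (H (t0, u))).baseSet := by
      intro u
      have hopen : IsOpen {z : I × I | H z ∈ (triv hp (H (t0, u))).baseSet} :=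
        (triv hp _).open_baseSet.preimage H.continuous
      obtain ⟨A, B, hA, hB, htA, huB, hsub⟩ := isOpen_prod_iff.1 hopen t0 u
        (mem_triv_baseSet hp _)
      exact ⟨A, B, hA, hB, htA, huB, fun τ hτ v hv => hsub (Set.mk_mem_prod hτ hv)⟩
    choose A B hA hB htA huB hAB using choice
    obtain ⟨t, ht⟩ := isCompact_univ.elim_finite_subcover B hB
      (fun u _ => mem_iUnion.2 ⟨u, huB u⟩)
    obtain ⟨u0, hu0, -⟩ := mem_iUnion₂.1 (ht (mem_univ 0))
    set V : Set I := ⋂ u ∈ t, A u with hV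
    have hVopen : IsOpen V := isOpen_biInter_finset (fun u _ => hA u)
    have ht0V : t0 ∈ V := mem_iInter₂.2 fun u _ => htA u
    haveI : Nonempty {u : I // u ∈ t} := ⟨⟨u0, hu0⟩⟩
    obtain ⟨n, hn, hseg⟩ := exists_partition (fun i : {u : I // u ∈ t} => B i.1)
      (fun i => hB i.1)
      (fun v hv => by
        obtain ⟨u, hu, hvB⟩ := mem_iUnion₂.1 (ht hv)
        exact mem_iUnion.2 ⟨⟨u, hu⟩, hvB⟩)
    have main : ∀ k : ℕ,
        ContinuousOn (fun τ => liftCM hp (row τ) e (heτ τ) (itv n k)) V := by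
      intro k
      induction k with
      | zero =>
        refine continuousOn_const (c := e) |>.congr fun τ _ => ?_
        rw [itv_zero, liftCM_zero]
      | succ k ih =>
        obtain ⟨i, hi⟩ := hseg k
        set T := triv hp (H (t0, i.1)) with hT
        have hab : itv n k ≤ itv n (k + 1) := itv_mono n k
        have hbase : ∀ τ ∈ V, ∀ v ∈ Icc (itv n k) (itv n (k + 1)), H (τ, v) ∈ T.baseSet :=
          fun τ hτ v hv => hAB i.1 τ (mem_iInter₂.1 hτ i.1 i.2) v (hi hv)
        have hid : ∀ τ ∈ V,
            liftCM hp (row τ) e (heτ τ) (itv n (k + 1)) =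
              T.toOpenPartialHomeomorph.symm (H (τ, itv n (k + 1)),
                (T (liftCM hp (row τ) e (heτ τ) (itv n k))).2) := by
          intro τ hτ
          set L := liftCM hp (row τ) e (heτ τ) with hL
          have hLa : p (L (itv n k)) = H (τ, itv n k) :=
            liftCM_proj hp (row τ) e (heτ τ) _
          have hsrc : L (itv n k) ∈ T.source :=
            T.mem_source.2 (by rw [hLa]; exact hbase τ hτ _ ⟨le_rfl, hab⟩)
          have heqon := hp.eqOn_of_comp_eqOn (isPreconnected_Icc_I (itv n k) (itv n (k + 1)))
            (g₁ := fun v => L v)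
            (g₂ := fun v => T.toOpenPartialHomeomorph.symm (H (τ, v), (T (L (itv n k))).2))
            L.continuous.continuousOn
            (T.toOpenPartialHomeomorph.continuousOn_symm.comp
              ((((H.continuous.comp (Continuous.prodMk_right τ)).continuousOn).prodMk
                continuousOn_const))
              (fun v hv => T.mem_target.2 (hbase τ hτ v hv)))
            (fun v hv => by
              show p (L v) = p (T.toOpenPartialHomeomorph.symm (H (τ, v), (T (L (itv n k))).2))
              rw [T.proj_symm_apply (T.mem_target.2 (hbase τ hτ v hv))]
              exact liftCM_proj hp (row τ) e (heτ τ) v)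
            (Set.left_mem_Icc.2 hab)
            (by
              show L (itv n k) =
                T.toOpenPartialHomeomorph.symm (H (τ, itv n k), (T (L (itv n k))).2)
              have h2 : (H (τ, itv n k), (T (L (itv n k))).2) = T (L (itv n k)) := by
                refine Prod.ext ?_ rfl
                show H (τ, itv n k) = (T (L (itv n k))).1
                rw [T.coe_fst hsrc, hLa]
              rw [h2]
              exact (T.toOpenPartialHomeomorph.left_inv hsrc).symm)
          exact heqon (Set.right_mem_Icc.2 hab)
        refine ContinuousOn.congr ?_ hid
        apply T.toOpenPartialHomeomorph.continuousOn_symm.comp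
        · refine ContinuousOn.prodMk ?_ ?_
          · exact (H.continuous.comp (continuous_id.prodMk continuous_const)).continuousOn
          · refine continuous_snd.comp_continuousOn
              (T.toOpenPartialHomeomorph.continuousOn.comp ih (fun τ hτ => ?_))
            refine T.mem_source.2 ?_
            have : p (liftCM hp (row τ) e (heτ τ) (itv n k)) = H (τ, itv n k) :=
              liftCM_proj hp (row τ) e (heτ τ) _
            rw [this]
            exact hbase τ hτ _ ⟨le_rfl, hab⟩
        · intro τ hτ
          exact T.mem_target.2 (hbase τ hτ _ ⟨hab, le_rfl⟩)
    have hFV : ContinuousOn F V := by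
      refine (main n).congr fun τ _ => ?_
      show F τ = liftCM hp (row τ) e (heτ τ) (itv n n)
      rw [itv_last hn]
    have hcF : ContinuousAt F t0 := hFV.continuousAt (hVopen.mem_nhds ht0V)
    haveI := discrete_fiber hp b
    have hmem : ∀ τ, F τ ∈ p ⁻¹' {b} := fun τ => hfib τ
    have hsing : IsOpen ({⟨F t0, hmem t0⟩} : Set (p ⁻¹' {b})) := isOpen_discrete _
    obtain ⟨O, hO, hOpre⟩ := isOpen_induced_iff.1 hsing
    have hFt0O : F t0 ∈ O := by
      have : (⟨F t0, hmem t0⟩ : p ⁻¹' {b}) ∈ Subtype.val ⁻¹' O := by rw [hOpre]; rfl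
      exact this
    filter_upwards [hcF.preimage_mem_nhds (hO.mem_nhds hFt0O)] with τ hτ
    have h3 : (⟨F τ, hmem τ⟩ : p ⁻¹' {b}) ∈ Subtype.val ⁻¹' O := hτ
    rw [hOpre] at h3
    exact congrArg Subtype.val h3
  have huniv : {τ : I | F τ = F 0} = univ := by
    have hopen : IsOpen {τ : I | F τ = F 0} := by
      rw [isOpen_iff_mem_nhds]
      intro τ hτ
      exact (key τ).mono fun y hy => hy.trans hτ
    have hclosed : IsClosed {τ : I | F τ = F 0} := by
      rw [← isOpen_compl_iff, isOpen_iff_mem_nhds]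
      intro τ hτ
      exact (key τ).mono fun y hy hc => hτ (hy.symm.trans hc)
    exact IsClopen.eq_univ ⟨hclosed, hopen⟩ ⟨0, rfl⟩
  have h01 : F 1 = F 0 := by
    have : (1 : I) ∈ {τ : I | F τ = F 0} := huniv ▸ mem_univ _
    exact this
  rw [← hF0, ← hF1, h01]

lemma liftEnd_cast {a b : X} {γ δ : Path a b} (hγδ : γ = δ) {e e' : E} (hee : e = e')
    (he : p e = a) (he' : p e' = a) : liftEnd hp γ e he = liftEnd hp δ e' he' := by
  subst hγδ
  subst hee
  rfl

end MonodromyAux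

open MonodromyAux in
/-- Monodromy principle: a continuous section of a covering map `p : E → X` over an open
path-connected subset `U` extends to a global continuous section, provided every loop of `X`
based at a point `x₀ ∈ U` is path-homotopic to a loop with range contained in `U`
(i.e. `π₁(U, x₀) → π₁(X, x₀)` is surjective). -/
theorem exists_global_section_extension_of_isCoveringMap
    {E X : Type*} [TopologicalSpace E] [TopologicalSpace X]
    [PathConnectedSpace X] [LocallyPathConnectedSpace X]
    (p : E → X) (hp : IsCoveringMap p)
    (U : Set X) (hU : IsOpen U) (hUpc : IsPathConnected U)
    (x₀ : X) (hx₀ : x₀ ∈ U)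
    (hsurj : ∀ γ : Path x₀ x₀, ∃ α : Path x₀ x₀, Set.range α ⊆ U ∧ γ.Homotopic α)
    (s : U → E) (hs : Continuous s) (hsect : ∀ u : U, p (s u) = u) :
    ∃ S : X → E, Continuous S ∧ (∀ x : X, p (S x) = x) ∧ ∀ u : U, S u = s u := by
  classical
  haveI hne : ∀ x : X, Nonempty (p ⁻¹' {x}) := by
    have hclopen : IsClopen {x : X | Nonempty (p ⁻¹' {x})} := by
      constructor
      · rw [← isOpen_compl_iff, isOpen_iff_mem_nhds]
        intro x hx
        obtain ⟨-, V, hxV, hV, -, H, hH⟩ := hp x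
        filter_upwards [hV.mem_nhds hxV] with y hy ⟨⟨z, hz⟩⟩
        exact hx ⟨(H ⟨z, show p z ∈ V by rw [show p z = y from hz]; exact hy⟩).2⟩
      · rw [isOpen_iff_mem_nhds]
        rintro x ⟨i⟩
        obtain ⟨-, V, hxV, hV, -, H, hH⟩ := hp x
        filter_upwards [hV.mem_nhds hxV] with y hy
        exact ⟨⟨(H.symm (⟨y, hy⟩, i)).1, by
          have := hH (H.symm (⟨y, hy⟩, i))
          rw [H.apply_symm_apply] at this
          exact this.symm⟩⟩
    have huniv := hclopen.eq_univ ⟨x₀, ⟨⟨s ⟨x₀, hx₀⟩, hsect _⟩⟩⟩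
    intro x
    exact (huniv ▸ mem_univ x : x ∈ {x : X | Nonempty (p ⁻¹' {x})})
  set e₀ : E := s ⟨x₀, hx₀⟩ with he₀def
  have he₀ : p e₀ = x₀ := hsect ⟨x₀, hx₀⟩
  -- the endpoint of the lift does not depend on the chosen path
  have W : ∀ (x : X) (γ γ' : Path x₀ x),
      MonodromyAux.liftEnd hp γ e₀ he₀ = MonodromyAux.liftEnd hp γ' e₀ he₀ := by
    intro x γ γ'
    obtain ⟨α, hα, hhom⟩ := hsurj (γ.trans γ'.symm)
    have hαlift : liftEnd hp α e₀ he₀ = e₀ := by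
      have h := liftEnd_of_section hp s hs hsect α
        (fun t => hα (Set.mem_range_self t)) hx₀ hx₀ (hsect ⟨x₀, hx₀⟩)
      exact h
    have hloop : liftEnd hp (γ.trans γ'.symm) e₀ he₀ = e₀ :=
      (liftEnd_congr hp _ _ hhom e₀ he₀).trans hαlift
    have htrans := liftEnd_trans hp γ γ'.symm e₀ he₀
    have hB : liftEnd hp γ'.symm (liftEnd hp γ e₀ he₀) (liftEnd_proj hp γ e₀ he₀) = e₀ :=
      htrans.symm.trans hloop
    have hsymm := liftEnd_symm hp γ'.symm (liftEnd hp γ e₀ he₀) (liftEnd_proj hp γ e₀ he₀)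
    calc liftEnd hp γ e₀ he₀
        = liftEnd hp γ'.symm.symm
            (liftEnd hp γ'.symm (liftEnd hp γ e₀ he₀) (liftEnd_proj hp γ e₀ he₀))
            (liftEnd_proj hp γ'.symm _ _) := hsymm.symm
      _ = liftEnd hp γ' e₀ he₀ := liftEnd_cast hp (Path.symm_symm γ') hB _ _
  set S : X → E := fun x => liftEnd hp (PathConnectedSpace.somePath x₀ x) e₀ he₀ with hS
  have hproj : ∀ x, p (S x) = x := fun x => liftEnd_proj hp _ e₀ he₀
  have hSU : ∀ u : U, S u = s u := by
    intro u
    obtain ⟨γ, hγ⟩ := hUpc.joinedIn x₀ hx₀ u u.2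
    have h := liftEnd_of_section hp s hs hsect γ hγ hx₀ u.2 (hsect ⟨x₀, hx₀⟩)
    have h2 : S u = liftEnd hp γ e₀ he₀ := W u _ γ
    rw [h2, h]
  refine ⟨S, ?_, hproj, hSU⟩
  rw [continuous_iff_continuousAt]
  intro x
  set T := triv hp x with hT
  obtain ⟨V, ⟨hVopen, hxV, hVpc⟩, hVsub⟩ := (isOpen_isPathConnected_basis x).mem_iff.1
    (T.open_baseSet.mem_nhds (mem_triv_baseSet hp x))
  have hsrc : S x ∈ T.source := T.mem_source.2 (by rw [hproj x]; exact mem_triv_baseSet hp x)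
  have hSV : ∀ y ∈ V, S y = T.toOpenPartialHomeomorph.symm (y, (T (S x)).2) := by
    intro y hy
    obtain ⟨η, hη⟩ := hVpc.joinedIn x hxV y hy
    have h1 : S y = liftEnd hp ((PathConnectedSpace.somePath x₀ x).trans η) e₀ he₀ := W y _ _
    rw [h1, liftEnd_trans hp _ _ e₀ he₀]
    have h2 := liftEnd_eq hp (Γ := fun t => T.toOpenPartialHomeomorph.symm (η t, (T (S x)).2))
      η (S x) (hproj x)
      (T.toOpenPartialHomeomorph.continuousOn_symm.comp_continuous
        (η.continuous.prodMk continuous_const)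
        (fun t => T.mem_target.2 (hVsub (hη t))))
      (fun t => T.proj_symm_apply (T.mem_target.2 (hVsub (hη t))))
      (by
        show T.toOpenPartialHomeomorph.symm (η 0, (T (S x)).2) = S x
        have h3 : ((η 0 : X), (T (S x)).2) = T (S x) := by
          refine Prod.ext ?_ rfl
          show (η 0 : X) = (T (S x)).1
          rw [T.coe_fst hsrc, hproj x, η.source]
        rw [h3]
        exact T.toOpenPartialHomeomorph.left_inv hsrc)
    have h4 : liftEnd hp η (S x) (hproj x) =
        liftEnd hp η (liftEnd hp (PathConnectedSpace.somePath x₀ x) e₀ he₀)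
          (liftEnd_proj hp (PathConnectedSpace.somePath x₀ x) e₀ he₀) :=
      liftEnd_cast hp rfl rfl _ _
    rw [← h4, ← h2]
    show T.toOpenPartialHomeomorph.symm ((η 1 : X), (T (S x)).2) =
      T.toOpenPartialHomeomorph.symm (y, (T (S x)).2)
    rw [η.target]
  have hContV : ContinuousOn S V := by
    refine ContinuousOn.congr ?_ hSV
    apply T.toOpenPartialHomeomorph.continuousOn_symm.comp
    · exact continuousOn_id.prodMk continuousOn_const
    · intro y hy
      exact T.mem_target.2 (hVsub hy)
  exact hContV.continuousAt (hVopen.mem_nhds hxV)
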